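/- arXiv:quant-ph/0605213 — 2 statements merged into one kernel-verified Lean document; each statement's English description precedes it below -/
import Mathlib

section
/- Let H_S and H_A be finite-dimensional complex Hilbert spaces, L_S a self-adjoint operator on H_S, L_A a self-adjoint operator on H_A, and Ψ0, Ψ1 unit vectors in H_S ⊗ H_A. Then for every PVM {E_α} on H_S and every PVM {P_j} on H_A, |⟨Ψ0, (L_S ⊗ 1 + 1 ⊗ L_A) Ψ1⟩| ≤ ‖L_S‖ Σ_j √( ⟨Ψ0, (1 ⊗ P_j) Ψ0⟩ · ⟨Ψ1, (1 ⊗ P_j) Ψ1⟩ ) + ‖L_A‖ Σ_α √( ⟨Ψ0, (E_α ⊗ 1) Ψ0⟩ · ⟨Ψ1, (E_α ⊗ 1) Ψ1⟩ ), where ‖·‖ is the operator norm. -/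
open Matrix Kronecker
open scoped ComplexOrder

-- Positive semidefinite square root (zero if not PSD).
open Classical in
noncomputable def psqrt {n : Type*} [Fintype n] [DecidableEq n] (A : Matrix n n ℂ) :
    Matrix n n ℂ :=
  if h : A.PosSemidef then
    (h.1.eigenvectorUnitary : Matrix n n ℂ) * diagonal ((↑) ∘ (√·) ∘ h.1.eigenvalues) *
      (star h.1.eigenvectorUnitary : Matrix n n ℂ)
  else 0

/-- Fidelity F(ρ0,ρ1) = tr √(√ρ0 ρ1 √ρ0). -/
noncomputable def fidelity {n : Type*} [Fintype n] [DecidableEq n] (ρ0 ρ1 : Matrix n n ℂ) : ℝ :=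
  (psqrt (psqrt ρ0 * ρ1 * psqrt ρ0)).trace.re

/-- Operator (ℓ²→ℓ²) norm of a matrix. -/
noncomputable def opNorm {n : Type*} [Fintype n] [DecidableEq n] (A : Matrix n n ℂ) : ℝ :=
  ‖LinearMap.toContinuousLinearMap (Matrix.toEuclideanLin A)‖

/-- Partial trace over the right (second) factor. -/
noncomputable def ptraceRight {m n : Type*} [Fintype m] [Fintype n]
    (ρ : Matrix (m × n) (m × n) ℂ) : Matrix m m ℂ :=
  Matrix.of fun i j => ∑ k, ρ (i, k) (j, k)

/-- Partial trace over the left (first) factor. -/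
noncomputable def ptraceLeft {m n : Type*} [Fintype m] [Fintype n]
    (ρ : Matrix (m × n) (m × n) ℂ) : Matrix n n ℂ :=
  Matrix.of fun i j => ∑ k, ρ (k, i) (k, j)



section Aux

variable {m n : Type*} [Fintype m] [Fintype n] [DecidableEq m] [DecidableEq n]

lemma aux_opNorm_nonneg (A : Matrix m m ℂ) : 0 ≤ opNorm A := norm_nonneg _

lemma aux_mulVec_sq_le (A : Matrix m m ℂ) (w : m → ℂ) :
    ∑ i, ‖(A *ᵥ w) i‖^2 ≤ opNorm A ^ 2 * ∑ i, ‖w i‖^2 := by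
  have h := (LinearMap.toContinuousLinearMap (Matrix.toEuclideanLin A)).le_opNorm
    ((WithLp.equiv 2 (m → ℂ)).symm w)
  have h1 : ‖LinearMap.toContinuousLinearMap (Matrix.toEuclideanLin A)
      ((WithLp.equiv 2 (m → ℂ)).symm w)‖ = Real.sqrt (∑ i, ‖(A *ᵥ w) i‖^2) := by
    rw [EuclideanSpace.norm_eq]; rfl
  have h2 : ‖((WithLp.equiv 2 (m → ℂ)).symm w)‖ = Real.sqrt (∑ i, ‖w i‖^2) := by
    rw [EuclideanSpace.norm_eq]; rfl
  rw [h1, h2] at h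
  have hs : Real.sqrt (∑ i, ‖(A *ᵥ w) i‖^2) ^ 2
      ≤ (opNorm A * Real.sqrt (∑ i, ‖w i‖^2))^2 :=
    pow_le_pow_left₀ (Real.sqrt_nonneg _) h 2
  rw [Real.sq_sqrt (by positivity)] at hs
  calc ∑ i, ‖(A *ᵥ w) i‖^2 ≤ (opNorm A * Real.sqrt (∑ i, ‖w i‖^2))^2 := hs
    _ = opNorm A ^2 * ∑ i, ‖w i‖^2 := by
        rw [mul_pow, Real.sq_sqrt (by positivity)]

lemma aux_kron1_apply (A : Matrix m m ℂ) (v : m × n → ℂ) (i : m) (k : n) :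
    ((A ⊗ₖ (1 : Matrix n n ℂ)) *ᵥ v) (i, k) = (A *ᵥ fun j => v (j, k)) i := by
  simp only [mulVec, dotProduct, Fintype.sum_prod_type, kroneckerMap_apply, one_apply]
  rw [Finset.sum_comm]
  simp [Finset.mul_sum, mul_ite]

lemma aux_one_kron_apply (A : Matrix n n ℂ) (v : m × n → ℂ) (i : m) (k : n) :
    (((1 : Matrix m m ℂ) ⊗ₖ A) *ᵥ v) (i, k) = (A *ᵥ fun l => v (i, l)) k := by
  simp only [mulVec, dotProduct, Fintype.sum_prod_type, kroneckerMap_apply, one_apply]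
  rw [Finset.sum_eq_single i] <;> simp +contextual [eq_comm]

lemma aux_cs_dot {N : Type*} [Fintype N] (u x : N → ℂ) :
    ‖(star u ⬝ᵥ x)‖ ≤ Real.sqrt (∑ i, ‖u i‖^2) * Real.sqrt (∑ i, ‖x i‖^2) := by
  have h := norm_inner_le_norm (𝕜 := ℂ) ((WithLp.equiv 2 (N → ℂ)).symm u)
    ((WithLp.equiv 2 (N → ℂ)).symm x)
  rw [EuclideanSpace.norm_eq, EuclideanSpace.norm_eq] at h
  convert h using 2
  case e'_3.e'_3 => rw [EuclideanSpace.inner_eq_star_dotProduct, dotProduct_comm]; rfl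
  all_goals rfl

lemma aux_re_star_dot {N : Type*} [Fintype N] (v : N → ℂ) :
    (star v ⬝ᵥ v).re = ∑ i, ‖v i‖^2 := by
  simp only [dotProduct, Pi.star_apply, Complex.re_sum]
  congr 1; ext i
  simp [Complex.mul_re, Complex.sq_norm, Complex.normSq_apply]

lemma aux_keyL (A : Matrix m m ℂ) (u v : m × n → ℂ) :
    ‖(star u ⬝ᵥ ((A ⊗ₖ (1 : Matrix n n ℂ)) *ᵥ v))‖ ≤
      opNorm A * (Real.sqrt (star u ⬝ᵥ u).re * Real.sqrt (star v ⬝ᵥ v).re) := by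
  have h1 : ∑ p : m × n, ‖((A ⊗ₖ (1 : Matrix n n ℂ)) *ᵥ v) p‖^2
      ≤ opNorm A ^ 2 * ∑ p : m × n, ‖v p‖^2 := by
    rw [Fintype.sum_prod_type, Finset.sum_comm]
    calc ∑ k : n, ∑ i : m, ‖((A ⊗ₖ (1 : Matrix n n ℂ)) *ᵥ v) (i, k)‖^2
        = ∑ k : n, ∑ i : m, ‖(A *ᵥ fun j => v (j, k)) i‖^2 := by
          simp_rw [aux_kron1_apply]
      _ ≤ ∑ k : n, opNorm A ^ 2 * ∑ j : m, ‖v (j, k)‖^2 :=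
          Finset.sum_le_sum fun k _ => aux_mulVec_sq_le A _
      _ = opNorm A ^ 2 * ∑ p : m × n, ‖v p‖^2 := by
          rw [← Finset.mul_sum, Fintype.sum_prod_type, Finset.sum_comm]
  calc ‖(star u ⬝ᵥ ((A ⊗ₖ (1 : Matrix n n ℂ)) *ᵥ v))‖
      ≤ Real.sqrt (∑ p : m × n, ‖u p‖^2) *
        Real.sqrt (∑ p : m × n, ‖((A ⊗ₖ (1 : Matrix n n ℂ)) *ᵥ v) p‖^2) := aux_cs_dot _ _
    _ ≤ Real.sqrt (∑ p : m × n, ‖u p‖^2) *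
        Real.sqrt (opNorm A ^ 2 * ∑ p : m × n, ‖v p‖^2) := by
        exact mul_le_mul_of_nonneg_left (Real.sqrt_le_sqrt h1) (Real.sqrt_nonneg _)
    _ = opNorm A * (Real.sqrt (star u ⬝ᵥ u).re * Real.sqrt (star v ⬝ᵥ v).re) := by
        rw [aux_re_star_dot, aux_re_star_dot, Real.sqrt_mul (by positivity),
          Real.sqrt_sq (aux_opNorm_nonneg A)]
        ring

lemma aux_keyR (A : Matrix n n ℂ) (u v : m × n → ℂ) :
    ‖(star u ⬝ᵥ (((1 : Matrix m m ℂ) ⊗ₖ A) *ᵥ v))‖ ≤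
      opNorm A * (Real.sqrt (star u ⬝ᵥ u).re * Real.sqrt (star v ⬝ᵥ v).re) := by
  have h1 : ∑ p : m × n, ‖(((1 : Matrix m m ℂ) ⊗ₖ A) *ᵥ v) p‖^2
      ≤ opNorm A ^ 2 * ∑ p : m × n, ‖v p‖^2 := by
    rw [Fintype.sum_prod_type]
    calc ∑ i : m, ∑ k : n, ‖(((1 : Matrix m m ℂ) ⊗ₖ A) *ᵥ v) (i, k)‖^2
        = ∑ i : m, ∑ k : n, ‖(A *ᵥ fun l => v (i, l)) k‖^2 := by
          simp_rw [aux_one_kron_apply]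
      _ ≤ ∑ i : m, opNorm A ^ 2 * ∑ l : n, ‖v (i, l)‖^2 :=
          Finset.sum_le_sum fun i _ => aux_mulVec_sq_le A _
      _ = opNorm A ^ 2 * ∑ p : m × n, ‖v p‖^2 := by
          rw [← Finset.mul_sum, Fintype.sum_prod_type]
  calc ‖(star u ⬝ᵥ (((1 : Matrix m m ℂ) ⊗ₖ A) *ᵥ v))‖
      ≤ Real.sqrt (∑ p : m × n, ‖u p‖^2) *
        Real.sqrt (∑ p : m × n, ‖(((1 : Matrix m m ℂ) ⊗ₖ A) *ᵥ v) p‖^2) := aux_cs_dot _ _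
    _ ≤ Real.sqrt (∑ p : m × n, ‖u p‖^2) *
        Real.sqrt (opNorm A ^ 2 * ∑ p : m × n, ‖v p‖^2) := by
        exact mul_le_mul_of_nonneg_left (Real.sqrt_le_sqrt h1) (Real.sqrt_nonneg _)
    _ = opNorm A * (Real.sqrt (star u ⬝ᵥ u).re * Real.sqrt (star v ⬝ᵥ v).re) := by
        rw [aux_re_star_dot, aux_re_star_dot, Real.sqrt_mul (by positivity),
          Real.sqrt_sq (aux_opNorm_nonneg A)]
        ring

lemma aux_sandwich {N : Type*} [Fintype N] (Q M : Matrix N N ℂ) (a b : N → ℂ) :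
    star (Q *ᵥ a) ⬝ᵥ (M *ᵥ (Q *ᵥ b)) = star a ⬝ᵥ ((Qᴴ * M * Q) *ᵥ b) := by
  rw [star_mulVec, mulVec_mulVec, Matrix.dotProduct_mulVec, Matrix.dotProduct_mulVec,
    vecMul_vecMul, Matrix.mul_assoc]

lemma aux_proj_dot {N : Type*} [Fintype N] (Q : Matrix N N ℂ) (hQ : Qᴴ = Q)
    (hQ2 : Q * Q = Q) (a : N → ℂ) :
    star a ⬝ᵥ (Q *ᵥ a) = star (Q *ᵥ a) ⬝ᵥ (Q *ᵥ a) := by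
  conv_rhs => rw [star_mulVec, Matrix.dotProduct_mulVec, vecMul_vecMul, hQ, hQ2,
    ← Matrix.dotProduct_mulVec]

lemma aux_sum_dot {N : Type*} [Fintype N] {k : ℕ} (M : Fin k → Matrix N N ℂ) (a b : N → ℂ) :
    star a ⬝ᵥ ((∑ j, M j) *ᵥ b) = ∑ j, star a ⬝ᵥ (M j *ᵥ b) := by
  simp only [mulVec, dotProduct, Matrix.sum_apply, Finset.sum_mul, Finset.mul_sum]
  exact (Finset.sum_congr rfl fun x _ => Finset.sum_comm).trans Finset.sum_comm

lemma aux_kron_conjT (A : Matrix m m ℂ) (B : Matrix n n ℂ) :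
    (A ⊗ₖ B)ᴴ = Aᴴ ⊗ₖ Bᴴ := by
  ext ⟨i, k⟩ ⟨i', k'⟩
  simp [Matrix.conjTranspose_apply, kroneckerMap_apply, mul_comm]

lemma aux_sum_kron (A : Matrix m m ℂ) {k : ℕ} (B : Fin k → Matrix n n ℂ) :
    ∑ j, A ⊗ₖ B j = A ⊗ₖ ∑ j, B j := by
  ext ⟨i, l⟩ ⟨i', l'⟩
  simp [Matrix.sum_apply, kroneckerMap_apply, Finset.mul_sum]

lemma aux_kron_sum (B : Matrix n n ℂ) {k : ℕ} (A : Fin k → Matrix m m ℂ) :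
    ∑ j, A j ⊗ₖ B = (∑ j, A j) ⊗ₖ B := by
  ext ⟨i, l⟩ ⟨i', l'⟩
  simp [Matrix.sum_apply, kroneckerMap_apply, Finset.sum_mul]

end Aux

/-- PVM decomposition bound for the matrix element of the additive quantity. -/
theorem abs_inner_conserved_le_pvm_overlaps
    {m n : Type*} [Fintype m] [Fintype n] [DecidableEq m] [DecidableEq n]
    (LS : Matrix m m ℂ) (hLS : LS.IsHermitian)
    (LA : Matrix n n ℂ) (hLA : LA.IsHermitian)
    (Ψ0 Ψ1 : m × n → ℂ) (hΨ0 : star Ψ0 ⬝ᵥ Ψ0 = 1) (hΨ1 : star Ψ1 ⬝ᵥ Ψ1 = 1)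
    (kE : ℕ) (E : Fin kE → Matrix m m ℂ)
    (hEsa : ∀ α, (E α)ᴴ = E α) (hEidem : ∀ α, E α * E α = E α)
    (hEorth : ∀ α β, α ≠ β → E α * E β = 0) (hEsum : ∑ α, E α = 1)
    (kP : ℕ) (P : Fin kP → Matrix n n ℂ)
    (hPsa : ∀ j, (P j)ᴴ = P j) (hPidem : ∀ j, P j * P j = P j)
    (hPorth : ∀ i j, i ≠ j → P i * P j = 0) (hPsum : ∑ j, P j = 1) :
    ‖(star Ψ0 ⬝ᵥ ((LS ⊗ₖ (1 : Matrix n n ℂ) + (1 : Matrix m m ℂ) ⊗ₖ LA) *ᵥ Ψ1))‖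
      ≤ opNorm LS * ∑ j, Real.sqrt
            ((star Ψ0 ⬝ᵥ (((1 : Matrix m m ℂ) ⊗ₖ P j) *ᵥ Ψ0)).re *
             (star Ψ1 ⬝ᵥ (((1 : Matrix m m ℂ) ⊗ₖ P j) *ᵥ Ψ1)).re)
        + opNorm LA * ∑ α, Real.sqrt
            ((star Ψ0 ⬝ᵥ ((E α ⊗ₖ (1 : Matrix n n ℂ)) *ᵥ Ψ0)).re *
             (star Ψ1 ⬝ᵥ ((E α ⊗ₖ (1 : Matrix n n ℂ)) *ᵥ Ψ1)).re) := by
  have hnn : ∀ (w : m × n → ℂ), 0 ≤ (star w ⬝ᵥ w).re := fun w => by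
    rw [aux_re_star_dot]; positivity
  have hQH : ∀ j, ((1 : Matrix m m ℂ) ⊗ₖ P j)ᴴ = (1 : Matrix m m ℂ) ⊗ₖ P j := fun j => by
    rw [aux_kron_conjT, conjTranspose_one, hPsa]
  have hQ2 : ∀ j, ((1 : Matrix m m ℂ) ⊗ₖ P j) * ((1 : Matrix m m ℂ) ⊗ₖ P j)
      = (1 : Matrix m m ℂ) ⊗ₖ P j := fun j => by
    rw [← mul_kronecker_mul, Matrix.one_mul, hPidem]
  have hRH : ∀ α, (E α ⊗ₖ (1 : Matrix n n ℂ))ᴴ = E α ⊗ₖ (1 : Matrix n n ℂ) := fun α => by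
    rw [aux_kron_conjT, conjTranspose_one, hEsa]
  have hR2 : ∀ α, (E α ⊗ₖ (1 : Matrix n n ℂ)) * (E α ⊗ₖ (1 : Matrix n n ℂ))
      = E α ⊗ₖ (1 : Matrix n n ℂ) := fun α => by
    rw [← mul_kronecker_mul, Matrix.one_mul, hEidem]
  have hsand1 : ∀ j, ((1 : Matrix m m ℂ) ⊗ₖ P j)ᴴ * (LS ⊗ₖ (1 : Matrix n n ℂ)) *
      ((1 : Matrix m m ℂ) ⊗ₖ P j) = LS ⊗ₖ P j := fun j => by
    rw [hQH, ← mul_kronecker_mul, ← mul_kronecker_mul]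
    simp [hPidem j]
  have hsand2 : ∀ α, (E α ⊗ₖ (1 : Matrix n n ℂ))ᴴ * ((1 : Matrix m m ℂ) ⊗ₖ LA) *
      (E α ⊗ₖ (1 : Matrix n n ℂ)) = E α ⊗ₖ LA := fun α => by
    rw [hRH, ← mul_kronecker_mul, ← mul_kronecker_mul]
    simp [hEidem α]
  have hsum1 : ∑ j, ((1 : Matrix m m ℂ) ⊗ₖ P j)ᴴ * (LS ⊗ₖ (1 : Matrix n n ℂ)) *
      ((1 : Matrix m m ℂ) ⊗ₖ P j) = LS ⊗ₖ (1 : Matrix n n ℂ) := by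
    simp_rw [hsand1]
    rw [aux_sum_kron, hPsum]
  have hsum2 : ∑ α, (E α ⊗ₖ (1 : Matrix n n ℂ))ᴴ * ((1 : Matrix m m ℂ) ⊗ₖ LA) *
      (E α ⊗ₖ (1 : Matrix n n ℂ)) = (1 : Matrix m m ℂ) ⊗ₖ LA := by
    simp_rw [hsand2]
    rw [aux_kron_sum, hEsum]
  have hterm1 : star Ψ0 ⬝ᵥ ((LS ⊗ₖ (1 : Matrix n n ℂ)) *ᵥ Ψ1) =
      ∑ j, star (((1 : Matrix m m ℂ) ⊗ₖ P j) *ᵥ Ψ0) ⬝ᵥ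
        ((LS ⊗ₖ (1 : Matrix n n ℂ)) *ᵥ (((1 : Matrix m m ℂ) ⊗ₖ P j) *ᵥ Ψ1)) := by
    conv_lhs => rw [← hsum1]
    rw [aux_sum_dot]
    exact Finset.sum_congr rfl fun j _ => (aux_sandwich _ _ _ _).symm
  have hterm2 : star Ψ0 ⬝ᵥ (((1 : Matrix m m ℂ) ⊗ₖ LA) *ᵥ Ψ1) =
      ∑ α, star ((E α ⊗ₖ (1 : Matrix n n ℂ)) *ᵥ Ψ0) ⬝ᵥ
        (((1 : Matrix m m ℂ) ⊗ₖ LA) *ᵥ ((E α ⊗ₖ (1 : Matrix n n ℂ)) *ᵥ Ψ1)) := by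
    conv_lhs => rw [← hsum2]
    rw [aux_sum_dot]
    exact Finset.sum_congr rfl fun α _ => (aux_sandwich _ _ _ _).symm
  have hb1 : ‖(star Ψ0 ⬝ᵥ ((LS ⊗ₖ (1 : Matrix n n ℂ)) *ᵥ Ψ1))‖ ≤
      opNorm LS * ∑ j, Real.sqrt
        ((star Ψ0 ⬝ᵥ (((1 : Matrix m m ℂ) ⊗ₖ P j) *ᵥ Ψ0)).re *
         (star Ψ1 ⬝ᵥ (((1 : Matrix m m ℂ) ⊗ₖ P j) *ᵥ Ψ1)).re) := by
    rw [hterm1]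
    refine le_trans (norm_sum_le _ _) ?_
    rw [Finset.mul_sum]
    refine Finset.sum_le_sum fun j _ => ?_
    have h := aux_keyL LS (((1 : Matrix m m ℂ) ⊗ₖ P j) *ᵥ Ψ0)
      (((1 : Matrix m m ℂ) ⊗ₖ P j) *ᵥ Ψ1)
    rw [← aux_proj_dot _ (hQH j) (hQ2 j) Ψ0, ← aux_proj_dot _ (hQH j) (hQ2 j) Ψ1] at h
    refine h.trans (le_of_eq ?_)
    rw [Real.sqrt_mul]
    rw [aux_proj_dot _ (hQH j) (hQ2 j) Ψ0]
    exact hnn _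
  have hb2 : ‖(star Ψ0 ⬝ᵥ (((1 : Matrix m m ℂ) ⊗ₖ LA) *ᵥ Ψ1))‖ ≤
      opNorm LA * ∑ α, Real.sqrt
        ((star Ψ0 ⬝ᵥ ((E α ⊗ₖ (1 : Matrix n n ℂ)) *ᵥ Ψ0)).re *
         (star Ψ1 ⬝ᵥ ((E α ⊗ₖ (1 : Matrix n n ℂ)) *ᵥ Ψ1)).re) := by
    rw [hterm2]
    refine le_trans (norm_sum_le _ _) ?_
    rw [Finset.mul_sum]
    refine Finset.sum_le_sum fun α _ => ?_
    have h := aux_keyR LA ((E α ⊗ₖ (1 : Matrix n n ℂ)) *ᵥ Ψ0)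
      ((E α ⊗ₖ (1 : Matrix n n ℂ)) *ᵥ Ψ1)
    rw [← aux_proj_dot _ (hRH α) (hR2 α) Ψ0, ← aux_proj_dot _ (hRH α) (hR2 α) Ψ1] at h
    refine h.trans (le_of_eq ?_)
    rw [Real.sqrt_mul]
    rw [aux_proj_dot _ (hRH α) (hR2 α) Ψ0]
    exact hnn _
  calc ‖(star Ψ0 ⬝ᵥ ((LS ⊗ₖ (1 : Matrix n n ℂ) + (1 : Matrix m m ℂ) ⊗ₖ LA) *ᵥ Ψ1))‖
      ≤ ‖(star Ψ0 ⬝ᵥ ((LS ⊗ₖ (1 : Matrix n n ℂ)) *ᵥ Ψ1))‖ +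
        ‖(star Ψ0 ⬝ᵥ (((1 : Matrix m m ℂ) ⊗ₖ LA) *ᵥ Ψ1))‖ := by
        rw [Matrix.add_mulVec, dotProduct_add]
        exact norm_add_le _ _
    _ ≤ _ := add_le_add hb1 hb2
end

section
/- (Wigner–Araki–Yanase theorem on distinguishability, pure apparatus state version.) Let H_S and H_A be finite-dimensional complex Hilbert spaces, L_S a self-adjoint operator on H_S, L_A a self-adjoint operator on H_A, and let U be a unitary operator on H_S ⊗ H_A commuting with L_S ⊗ 1 + 1 ⊗ L_A. Let ψ0, ψ1 ∈ H_S be orthogonal unit vectors and Ω ∈ H_A a unit vector, and let ρ_i := U |ψ_i ⊗ Ω⟩⟨ψ_i ⊗ Ω| U* for i = 0, 1. Then |⟨ψ0, L_S ψ1⟩| ≤ ‖L_A‖ · F(ρ0^S, ρ1^S) + ‖L_S‖ · F(ρ0^A, ρ1^A), where ρ_i^S and ρ_i^A are the reduced density matrices of ρ_i on H_S and H_A respectively, F is the fidelity, and ‖·‖ the operator norm. -/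
open Matrix Kronecker
open scoped ComplexOrder

open scoped Matrix.Norms.L2Operator InnerProductSpace
set_option linter.unusedSectionVars false
set_option maxHeartbeats 1600000

lemma opNorm_eq_l2 {n : Type*} [Fintype n] [DecidableEq n] (A : Matrix n n ℂ) :
    opNorm A = ‖A‖ := rfl

section AuxA
variable {l m n : Type*} [Fintype l] [Fintype m] [Fintype n] [DecidableEq l] [DecidableEq m] [DecidableEq n]

lemma psqrt_of_posSemidef {A : Matrix n n ℂ} (h : A.PosSemidef) :
    psqrt A = (h.1.eigenvectorUnitary : Matrix n n ℂ) *
      diagonal ((↑) ∘ (√·) ∘ h.1.eigenvalues) * (star h.1.eigenvectorUnitary : Matrix n n ℂ) :=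
  dif_pos h

lemma psqrt_posSemidef {A : Matrix n n ℂ} (h : A.PosSemidef) : (psqrt A).PosSemidef := by
  rw [psqrt_of_posSemidef h]
  have hd : (diagonal ((↑) ∘ (√·) ∘ h.1.eigenvalues : n → ℂ)).PosSemidef :=
    Matrix.posSemidef_diagonal_iff.mpr fun i => Complex.zero_le_real.mpr (Real.sqrt_nonneg _)
  have := hd.mul_mul_conjTranspose_same (h.1.eigenvectorUnitary : Matrix n n ℂ)
  rwa [← Matrix.star_eq_conjTranspose] at this

lemma psqrt_mul_self {A : Matrix n n ℂ} (h : A.PosSemidef) : psqrt A * psqrt A = A := by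
  rw [psqrt_of_posSemidef h]
  have hV1 : star (h.1.eigenvectorUnitary : Matrix n n ℂ) * (h.1.eigenvectorUnitary : Matrix n n ℂ) = 1 :=
    Unitary.coe_star_mul_self _
  have hsp := h.1.spectral_theorem
  rw [Unitary.conjStarAlgAut_apply] at hsp
  conv_rhs => rw [hsp]
  simp only [Matrix.mul_assoc]
  rw [← Matrix.mul_assoc (star _) _, hV1, Matrix.one_mul, ← Matrix.mul_assoc (diagonal _),
    diagonal_mul_diagonal]
  congr 3
  funext i
  simp only [Function.comp_apply]
  rw [← Complex.ofReal_mul, Real.mul_self_sqrt (h.eigenvalues_nonneg i)]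
  rfl

lemma euclid_normsq (v : l → ℂ) :
    ‖(WithLp.equiv 2 (l → ℂ)).symm v‖ ^ 2 = ∑ j, Complex.normSq (v j) := by
  rw [EuclideanSpace.norm_eq]
  rw [Real.sq_sqrt (by positivity)]
  congr 1; ext j
  rw [WithLp.equiv_symm_apply, WithLp.ofLp_toLp]
  rw [Complex.sq_norm]

lemma abs_dotProduct_mulVec_le (S : Matrix l l ℂ) (v : l → ℂ) :
    ‖star v ⬝ᵥ (S *ᵥ v)‖ ≤ ‖S‖ * ∑ j, Complex.normSq (v j) := by
  have h1 : star v ⬝ᵥ (S *ᵥ v)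
      = ⟪(WithLp.equiv 2 (l → ℂ)).symm v, (WithLp.equiv 2 (l → ℂ)).symm (S *ᵥ v)⟫_ℂ := by
    rw [WithLp.equiv_symm_apply, EuclideanSpace.inner_toLp_toLp, dotProduct_comm]
  set v' : EuclideanSpace ℂ l := (WithLp.equiv 2 (l → ℂ)).symm v
  set w' : EuclideanSpace ℂ l := (WithLp.equiv 2 (l → ℂ)).symm (S *ᵥ v)
  have h2 : ‖⟪v', w'⟫_ℂ‖ ≤ ‖v'‖ * ‖w'‖ := by
    exact norm_inner_le_norm (𝕜 := ℂ) v' w'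
  have h3 : ‖w'‖ ≤ ‖S‖ * ‖v'‖ := S.l2_opNorm_mulVec v'
  calc ‖star v ⬝ᵥ (S *ᵥ v)‖ = ‖⟪v', w'⟫_ℂ‖ := by rw [h1]
    _ ≤ ‖v'‖ * ‖w'‖ := h2
    _ ≤ ‖v'‖ * (‖S‖ * ‖v'‖) := mul_le_mul_of_nonneg_left h3 (norm_nonneg _)
    _ = ‖S‖ * ‖v'‖ ^ 2 := by ring
    _ = ‖S‖ * ∑ j, Complex.normSq (v j) := by rw [euclid_normsq]

lemma trace_hermitian_sq {C : Matrix l l ℂ} (hC : C.IsHermitian) :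
    (C * C).trace = ((∑ i, ∑ j, Complex.normSq (C j i) : ℝ) : ℂ) := by
  have hentry : ∀ i j, C i j = starRingEnd ℂ (C j i) := fun i j => by
    conv_lhs => rw [← hC]
    simp [Matrix.conjTranspose_apply]
  rw [Matrix.trace]
  push_cast
  congr 1; ext i
  rw [Matrix.diag_apply, Matrix.mul_apply]
  congr 1; ext j
  rw [hentry i j, Complex.normSq_eq_conj_mul_self]

lemma abs_trace_psd_mul {N : Matrix l l ℂ} (hN : N.PosSemidef) (S : Matrix l l ℂ) :
    ‖(N * S).trace‖ ≤ ‖S‖ * N.trace.re := by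
  set C := psqrt N with hCdef
  have hC : C.IsHermitian := (psqrt_posSemidef hN).1
  have hentry : ∀ i j, starRingEnd ℂ (C j i) = C i j := fun i j => by
    conv_rhs => rw [← hC]
    simp [Matrix.conjTranspose_apply]
  have hCC : C * C = N := psqrt_mul_self hN
  have key : (N * S).trace = ∑ i, star (fun j => C j i) ⬝ᵥ (S *ᵥ fun j => C j i) := by
    rw [← hCC, ← Matrix.trace_mul_cycle C S C, Matrix.trace]
    congr 1; ext i
    rw [Matrix.diag_apply, Matrix.mul_apply]
    simp only [Matrix.mul_apply, Matrix.mulVec, dotProduct, Pi.star_apply,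
      RCLike.star_def, hentry, Finset.sum_mul, Finset.mul_sum]
    rw [Finset.sum_comm]
    apply Finset.sum_congr rfl; intro j _
    apply Finset.sum_congr rfl; intro k _
    ring
  have hNt : N.trace = ((∑ i, ∑ j, Complex.normSq (C j i) : ℝ) : ℂ) := by
    conv_lhs => rw [← hCC]
    exact trace_hermitian_sq hC
  have htr : N.trace.re = ∑ i, ∑ j, Complex.normSq (C j i) := by
    rw [hNt, Complex.ofReal_re]
  rw [key, htr]
  calc ‖∑ i, star (fun j => C j i) ⬝ᵥ (S *ᵥ fun j => C j i)‖
      ≤ ∑ i, ‖star (fun j => C j i) ⬝ᵥ (S *ᵥ fun j => C j i)‖ := by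
        exact norm_sum_le _ _
    _ ≤ ∑ i, ‖S‖ * ∑ j, Complex.normSq (C j i) := by
        exact Finset.sum_le_sum fun i _ => abs_dotProduct_mulVec_le S _
    _ = ‖S‖ * ∑ i, ∑ j, Complex.normSq (C j i) := by rw [Finset.mul_sum]

lemma psd_trace_re_nonneg {N : Matrix l l ℂ} (hN : N.PosSemidef) : 0 ≤ N.trace.re := by
  have hC : (psqrt N).IsHermitian := (psqrt_posSemidef hN).1
  have : N.trace = ((∑ i, ∑ j, Complex.normSq (psqrt N j i) : ℝ) : ℂ) := by
    conv_lhs => rw [← psqrt_mul_self hN]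
    exact trace_hermitian_sq hC
  rw [this, Complex.ofReal_re]
  exact Finset.sum_nonneg fun i _ => Finset.sum_nonneg fun j _ => Complex.normSq_nonneg _

lemma proj_norm_le_one {P : Matrix l l ℂ} (hP : Pᴴ = P) (hP2 : P * P = P) : ‖P‖ ≤ 1 := by
  have h1 : ‖Pᴴ * P‖ = ‖P‖ * ‖P‖ := Matrix.l2_opNorm_conjTranspose_mul_self P
  rw [hP, hP2] at h1
  nlinarith [norm_nonneg P]

lemma exists_polar (A : Matrix m n ℂ) :
    ∃ W : Matrix m n ℂ, ‖W‖ ≤ 1 ∧ A = psqrt (A * Aᴴ) * W := by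
  have hH : (A * Aᴴ).PosSemidef := Matrix.posSemidef_self_mul_conjTranspose A
  have hHer : (A * Aᴴ).IsHermitian := hH.1
  set V : Matrix m m ℂ := ↑(hHer.eigenvectorUnitary) with hVdef
  have hV1 : star V * V = 1 := Unitary.coe_star_mul_self _
  have hV2 : V * star V = 1 := Unitary.coe_mul_star_self _
  set lam : m → ℝ := hHer.eigenvalues with hlamdef
  have hlam : ∀ i, 0 ≤ lam i := fun i => hH.eigenvalues_nonneg i
  have hspec : A * Aᴴ = V * diagonal (fun i => (lam i : ℂ)) * star V := by
    have := hHer.spectral_theorem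
    rw [Unitary.conjStarAlgAut_apply] at this
    exact this
  have key : ∀ d e : m → ℂ,
      (V * diagonal d * star V) * (V * diagonal e * star V) = V * diagonal (fun i => d i * e i) * star V := by
    intro d e
    have : (V * diagonal d * star V) * (V * diagonal e * star V)
        = V * diagonal d * (star V * V) * diagonal e * star V := by
      simp only [Matrix.mul_assoc]
    rw [this, hV1, Matrix.mul_one, Matrix.mul_assoc (V * diagonal d)]
    rw [Matrix.mul_assoc V, ← Matrix.mul_assoc (diagonal d), Matrix.diagonal_mul_diagonal]
    simp only [Matrix.mul_assoc]
  have herm : ∀ d : m → ℂ, (∀ i, (starRingEnd ℂ) (d i) = d i) → (V * diagonal d * star V)ᴴ = V * diagonal d * star V := by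
    intro d hd
    rw [Matrix.star_eq_conjTranspose]
    simp only [Matrix.conjTranspose_mul, Matrix.conjTranspose_conjTranspose,
      Matrix.diagonal_conjTranspose]
    rw [Matrix.mul_assoc]
    congr 1
    · ext i j; simp [Matrix.diagonal, Pi.star_apply, RCLike.star_def, hd]
  set sC : m → ℂ := fun i => (Real.sqrt (lam i) : ℂ) with hsC
  set tC : m → ℂ := fun i => if lam i = 0 then 0 else ((Real.sqrt (lam i))⁻¹ : ℂ) with htC
  set xC : m → ℂ := fun i => if lam i = 0 then 0 else 1 with hxC
  set N := V * diagonal sC * star V with hNdef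
  set Np := V * diagonal tC * star V with hNpdef
  set P := V * diagonal xC * star V with hPdef
  have htreal : ∀ i, (starRingEnd ℂ) (tC i) = tC i := fun i => by
    by_cases h : lam i = 0 <;> simp [htC, h, Complex.conj_ofReal]
  have hxreal : ∀ i, (starRingEnd ℂ) (xC i) = xC i := fun i => by
    by_cases h : lam i = 0 <;> simp [hxC, h]
  have hsqne : ∀ i, lam i ≠ 0 → Real.sqrt (lam i) ≠ 0 := fun i h =>
    ne_of_gt (Real.sqrt_pos.mpr (lt_of_le_of_ne (hlam i) (Ne.symm h)))
  have hNpsd : N.PosSemidef := by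
    have hd : (diagonal sC).PosSemidef := Matrix.posSemidef_diagonal_iff.mpr fun i => by
      exact Complex.zero_le_real.mpr (Real.sqrt_nonneg _)
    have := hd.mul_mul_conjTranspose_same V
    rwa [← Matrix.star_eq_conjTranspose] at this
  have hss : (fun i => sC i * sC i) = fun i => ((lam i : ℝ) : ℂ) := by
    funext i
    rw [hsC]
    rw [← Complex.ofReal_mul, Real.mul_self_sqrt (hlam i)]
  have hNsq : N ^ 2 = A * Aᴴ := by
    rw [pow_two, hNdef, key, hss, hspec]
  have hsqrt : psqrt (A * Aᴴ) = N := by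
    rw [psqrt_of_posSemidef hH]
    rfl
  have hst : (fun i => sC i * tC i) = xC := by
    funext i
    by_cases h : lam i = 0
    · simp [hsC, htC, hxC, h]
    · rw [hsC, htC, hxC]
      simp only [if_neg h]
      rw [← Complex.ofReal_inv, ← Complex.ofReal_mul, mul_inv_cancel₀ (hsqne i h)]
      norm_num
  have hNNp : N * Np = P := by
    rw [hNdef, hNpdef, key, hst, hPdef]
  have hxl : (fun i => xC i * ((lam i : ℝ) : ℂ)) = fun i => ((lam i : ℝ) : ℂ) := by
    funext i
    by_cases h : lam i = 0 <;> simp [hxC, h]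
  have hPA : P * A = A := by
    have h1 : P * (A * Aᴴ) = A * Aᴴ := by
      conv_lhs => rw [hspec, hPdef, key, hxl]
      rw [hspec]
    have h2 : ((1 - P) * A) * ((1 - P) * A)ᴴ = 0 := by
      have e1 : ((1 - P) * A) * ((1 - P) * A)ᴴ = ((1 - P) * (A * Aᴴ)) * (1 - P)ᴴ := by
        rw [Matrix.conjTranspose_mul]
        simp only [Matrix.mul_assoc]
      rw [e1, Matrix.sub_mul, Matrix.one_mul, h1, sub_self, Matrix.zero_mul]
    have h3 : (1 - P) * A = 0 := Matrix.self_mul_conjTranspose_eq_zero.mp h2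
    rw [Matrix.sub_mul, Matrix.one_mul] at h3
    exact (sub_eq_zero.mp h3).symm
  have htlt : (fun i => (fun i => tC i * ((lam i : ℝ) : ℂ)) i * tC i) = xC := by
    funext i
    by_cases h : lam i = 0
    · simp [htC, hxC, h]
    · simp only [htC, hxC, if_neg h]
      rw [← Complex.ofReal_inv, ← Complex.ofReal_mul, ← Complex.ofReal_mul]
      rw [show (Real.sqrt (lam i))⁻¹ * lam i * (Real.sqrt (lam i))⁻¹
            = (Real.sqrt (lam i))⁻¹ * (Real.sqrt (lam i))⁻¹ * (Real.sqrt (lam i) * Real.sqrt (lam i)) by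
          rw [Real.mul_self_sqrt (hlam i)]; ring]
      rw [show ((Real.sqrt (lam i))⁻¹ * (Real.sqrt (lam i))⁻¹ * (Real.sqrt (lam i) * Real.sqrt (lam i)) : ℝ)
            = ((Real.sqrt (lam i))⁻¹ * Real.sqrt (lam i)) * ((Real.sqrt (lam i))⁻¹ * Real.sqrt (lam i)) from by ring,
         inv_mul_cancel₀ (hsqne i h)]
      norm_num
  have hNpherm : Npᴴ = Np := herm tC htreal
  have hWW : (Np * A) * (Np * A)ᴴ = P := by
    have e1 : (Np * A) * (Np * A)ᴴ = Np * (A * Aᴴ) * Npᴴ := by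
      rw [Matrix.conjTranspose_mul]
      simp only [Matrix.mul_assoc]
    rw [e1, hNpherm, hspec, hNpdef, key, key, htlt]
  have hPherm : Pᴴ = P := herm xC hxreal
  have hxx : (fun i => xC i * xC i) = xC := by
    funext i
    by_cases h : lam i = 0 <;> simp [hxC, h]
  have hPP : P * P = P := by
    rw [hPdef, key, hxx]
  refine ⟨Np * A, ?_, ?_⟩
  · have hn1 : ‖(Np * A) * (Np * A)ᴴ‖ = ‖(Np * A)ᴴ‖ * ‖(Np * A)ᴴ‖ := by
      have := Matrix.l2_opNorm_conjTranspose_mul_self (Np * A)ᴴ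
      rwa [Matrix.conjTranspose_conjTranspose] at this
    rw [hWW, Matrix.l2_opNorm_conjTranspose] at hn1
    have hp1 : ‖P‖ ≤ 1 := proj_norm_le_one hPherm hPP
    nlinarith [norm_nonneg (Np * A), norm_nonneg P]
  · rw [hsqrt, ← Matrix.mul_assoc, hNNp, hPA]


variable {l m n : Type*} [Fintype l] [Fintype m] [Fintype n] [DecidableEq l] [DecidableEq m] [DecidableEq n]

lemma inner_psd {ρ0 ρ1 : Matrix l l ℂ} (h0 : ρ0.PosSemidef) (h1 : ρ1.PosSemidef) :
    (psqrt ρ0 * ρ1 * psqrt ρ0).PosSemidef := by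
  have := h1.mul_mul_conjTranspose_same (psqrt ρ0)
  rwa [(psqrt_posSemidef h0).1.eq] at this

lemma fidelity_nonneg {ρ0 ρ1 : Matrix l l ℂ} (h0 : ρ0.PosSemidef) (h1 : ρ1.PosSemidef) :
    0 ≤ fidelity ρ0 ρ1 :=
  psd_trace_re_nonneg (psqrt_posSemidef (inner_psd h0 h1))

lemma fidelity_bound {ρ0 ρ1 : Matrix l l ℂ} (h0 : ρ0.PosSemidef) (h1 : ρ1.PosSemidef)
    (K : Matrix l l ℂ) :
    ‖(K * (psqrt ρ0 * psqrt ρ1)).trace‖ ≤ ‖K‖ * fidelity ρ0 ρ1 := by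
  set M := psqrt ρ0 * psqrt ρ1 with hMdef
  have hMM : M * Mᴴ = psqrt ρ0 * ρ1 * psqrt ρ0 := by
    rw [hMdef, Matrix.conjTranspose_mul, (psqrt_posSemidef h0).1.eq, (psqrt_posSemidef h1).1.eq]
    rw [Matrix.mul_assoc, ← Matrix.mul_assoc (psqrt ρ1), psqrt_mul_self h1]
    simp only [Matrix.mul_assoc]
  obtain ⟨W, hWn, hMW⟩ := exists_polar M
  have hMMpsd : (M * Mᴴ).PosSemidef := Matrix.posSemidef_self_mul_conjTranspose M
  have e : (K * M).trace = ((psqrt (M * Mᴴ)) * (W * K)).trace := by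
    conv_lhs => rw [hMW]
    rw [← Matrix.mul_assoc, Matrix.trace_mul_cycle K (psqrt (M * Mᴴ)) W,
      Matrix.trace_mul_comm, Matrix.mul_assoc]
  have hb := abs_trace_psd_mul (psqrt_posSemidef hMMpsd) (W * K)
  have hfid : (psqrt (M * Mᴴ)).trace.re = fidelity ρ0 ρ1 := by
    rw [hMM]; rfl
  have hWK : ‖W * K‖ ≤ ‖K‖ := by
    calc ‖W * K‖ ≤ ‖W‖ * ‖K‖ := Matrix.l2_opNorm_mul W K
      _ ≤ 1 * ‖K‖ := mul_le_mul_of_nonneg_right hWn (norm_nonneg _)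
      _ = ‖K‖ := one_mul _
  rw [e]
  calc ‖(psqrt (M * Mᴴ) * (W * K)).trace‖
      ≤ ‖W * K‖ * (psqrt (M * Mᴴ)).trace.re := hb
    _ ≤ ‖K‖ * (psqrt (M * Mᴴ)).trace.re := by
        apply mul_le_mul_of_nonneg_right hWK
        rw [hfid]; exact fidelity_nonneg h0 h1
    _ = ‖K‖ * fidelity ρ0 ρ1 := by rw [hfid]

lemma overlap_bound (A0 A1 : Matrix m n ℂ) (K : Matrix n n ℂ) :
    ‖(K * (A0ᴴ * A1)).trace‖
      ≤ ‖K‖ * fidelity (A0 * A0ᴴ) (A1 * A1ᴴ) := by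
  obtain ⟨W0, hW0n, hA0⟩ := exists_polar A0
  obtain ⟨W1, hW1n, hA1⟩ := exists_polar A1
  set N0 := psqrt (A0 * A0ᴴ) with hN0
  set N1 := psqrt (A1 * A1ᴴ) with hN1
  have h0 : (A0 * A0ᴴ).PosSemidef := Matrix.posSemidef_self_mul_conjTranspose A0
  have h1 : (A1 * A1ᴴ).PosSemidef := Matrix.posSemidef_self_mul_conjTranspose A1
  have hA0H : A0ᴴ = W0ᴴ * N0 := by
    conv_lhs => rw [hA0]
    rw [Matrix.conjTranspose_mul, (psqrt_posSemidef h0).1.eq]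
  have e : (K * (A0ᴴ * A1)).trace = ((W1 * K * W0ᴴ) * (N0 * N1)).trace := by
    conv_lhs => rw [hA0H, hA1]
    rw [show K * (W0ᴴ * N0 * (N1 * W1)) = (K * W0ᴴ * N0 * N1) * W1 by
      simp only [Matrix.mul_assoc]]
    rw [Matrix.trace_mul_comm]
    simp only [Matrix.mul_assoc]
  have hK : ‖W1 * K * W0ᴴ‖ ≤ ‖K‖ := by
    calc ‖W1 * K * W0ᴴ‖ ≤ ‖W1 * K‖ * ‖W0ᴴ‖ := Matrix.l2_opNorm_mul _ _
      _ ≤ ‖W1‖ * ‖K‖ * ‖W0ᴴ‖ :=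
          mul_le_mul_of_nonneg_right (Matrix.l2_opNorm_mul _ _) (norm_nonneg _)
      _ ≤ 1 * ‖K‖ * 1 := by
          have h0' : ‖W0ᴴ‖ ≤ 1 := by rw [Matrix.l2_opNorm_conjTranspose]; exact hW0n
          exact mul_le_mul (mul_le_mul hW1n le_rfl (norm_nonneg K) zero_le_one) h0'
            (norm_nonneg _) (by positivity)
      _ = ‖K‖ := by ring
  rw [e]
  calc ‖((W1 * K * W0ᴴ) * (N0 * N1)).trace‖
      ≤ ‖W1 * K * W0ᴴ‖ * fidelity (A0 * A0ᴴ) (A1 * A1ᴴ) := fidelity_bound h0 h1 _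
    _ ≤ ‖K‖ * fidelity (A0 * A0ᴴ) (A1 * A1ᴴ) :=
        mul_le_mul_of_nonneg_right hK (fidelity_nonneg h0 h1)

end AuxA

section AuxB
lemma norm_star_vec {l : Type*} [Fintype l] (y : l → ℂ) :
    ‖(WithLp.equiv 2 (l → ℂ)).symm (star y)‖ = ‖(WithLp.equiv 2 (l → ℂ)).symm y‖ := by
  rw [EuclideanSpace.norm_eq, EuclideanSpace.norm_eq]
  congr 1
  congr 1
  ext j
  simp [WithLp.equiv_symm_apply]

lemma conj_mulVec {l m : Type*} [Fintype l] [Fintype m] (A : Matrix m l ℂ) (x : l → ℂ) :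
    A.map (starRingEnd ℂ) *ᵥ x = star (A *ᵥ star x) := by
  funext j
  simp only [Matrix.mulVec, dotProduct, Matrix.map_apply, Pi.star_apply,
    RCLike.star_def, map_sum, _root_.map_mul, Complex.conj_conj]

lemma l2_opNorm_conj_le {l m : Type*} [Fintype l] [Fintype m] [DecidableEq l] [DecidableEq m]
    (A : Matrix m l ℂ) : ‖A.map (starRingEnd ℂ)‖ ≤ ‖A‖ := by
  rw [Matrix.l2_opNorm_def]
  apply ContinuousLinearMap.opNorm_le_bound _ (norm_nonneg A)
  intro x
  show ‖Matrix.toEuclideanLin (A.map (starRingEnd ℂ)) x‖ ≤ ‖A‖ * ‖x‖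
  rw [Matrix.toEuclideanLin_apply]
  rw [conj_mulVec]
  rw [← WithLp.equiv_symm_apply, norm_star_vec]
  have h1 := A.l2_opNorm_mulVec ((WithLp.equiv 2 (l → ℂ)).symm (star ((WithLp.equiv 2 (l → ℂ)) x)))
  have h2 : ‖(WithLp.equiv 2 (l → ℂ)).symm (star ((WithLp.equiv 2 (l → ℂ)) x))‖ = ‖x‖ := by
    rw [norm_star_vec]
    simp
  rw [h2] at h1
  simpa using h1

lemma l2_opNorm_conj_eq {l m : Type*} [Fintype l] [Fintype m] [DecidableEq l] [DecidableEq m]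
    (A : Matrix m l ℂ) : ‖A.map (starRingEnd ℂ)‖ = ‖A‖ := by
  refine le_antisymm (l2_opNorm_conj_le A) ?_
  have h2 := l2_opNorm_conj_le (A.map (starRingEnd ℂ))
  have h3 : (A.map (starRingEnd ℂ)).map (starRingEnd ℂ) = A := by
    ext i j; simp
  rwa [h3] at h2

lemma l2_opNorm_transpose {l m : Type*} [Fintype l] [Fintype m] [DecidableEq l] [DecidableEq m]
    (A : Matrix m l ℂ) : ‖Aᵀ‖ = ‖A‖ := by
  have h : Aᵀ = (A.map (starRingEnd ℂ))ᴴ := by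
    ext i j; simp [Matrix.conjTranspose_apply]
  rw [h, Matrix.l2_opNorm_conjTranspose, l2_opNorm_conj_eq]

lemma kron_mulVec {m n : Type*} [Fintype m] [Fintype n]
    (B : Matrix m m ℂ) (C : Matrix n n ℂ) (b : m → ℂ) (d : n → ℂ) :
    ((B ⊗ₖ C) *ᵥ fun p : m × n => b p.1 * d p.2)
      = fun p : m × n => (B *ᵥ b) p.1 * (C *ᵥ d) p.2 := by
  funext p
  simp only [Matrix.mulVec, dotProduct, Matrix.kroneckerMap_apply, Fintype.sum_prod_type]
  rw [Finset.sum_mul_sum]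
  apply Finset.sum_congr rfl; intro j' _
  apply Finset.sum_congr rfl; intro k' _
  ring

lemma kron_dot {m n : Type*} [Fintype m] [Fintype n]
    (B : Matrix m m ℂ) (C : Matrix n n ℂ) (a b : m → ℂ) (c d : n → ℂ) :
    star (fun p : m × n => a p.1 * c p.2) ⬝ᵥ ((B ⊗ₖ C) *ᵥ fun p : m × n => b p.1 * d p.2)
      = (star a ⬝ᵥ (B *ᵥ b)) * (star c ⬝ᵥ (C *ᵥ d)) := by
  rw [kron_mulVec]
  simp only [dotProduct, Fintype.sum_prod_type, Pi.star_apply, star_mul',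
    RCLike.star_def]
  rw [Finset.sum_mul_sum]
  apply Finset.sum_congr rfl; intro j _
  apply Finset.sum_congr rfl; intro k _
  ring

end AuxB

section AuxC
variable {m n : Type*} [Fintype m] [Fintype n] [DecidableEq m] [DecidableEq n]

lemma one_kron_mulVec (C : Matrix n n ℂ) (Φ : m × n → ℂ) :
    ((1 : Matrix m m ℂ) ⊗ₖ C) *ᵥ Φ = fun p : m × n => ∑ k', C p.2 k' * Φ (p.1, k') := by
  funext p
  simp only [Matrix.mulVec, dotProduct, Matrix.kroneckerMap_apply, Fintype.sum_prod_type,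
    Matrix.one_apply, ite_mul, one_mul, zero_mul]
  rw [Finset.sum_comm]
  simp

lemma kron_one_mulVec (B : Matrix m m ℂ) (Φ : m × n → ℂ) :
    (B ⊗ₖ (1 : Matrix n n ℂ)) *ᵥ Φ = fun p : m × n => ∑ j', B p.1 j' * Φ (j', p.2) := by
  funext p
  simp only [Matrix.mulVec, dotProduct, Matrix.kroneckerMap_apply, Fintype.sum_prod_type,
    Matrix.one_apply, mul_ite, mul_one, mul_zero, ite_mul, zero_mul]
  simp

lemma dot_kron_right (C : Matrix n n ℂ) (Φ0 Φ1 : m × n → ℂ) :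
    star Φ0 ⬝ᵥ (((1 : Matrix m m ℂ) ⊗ₖ C) *ᵥ Φ1)
      = (Cᵀ * ((Matrix.of fun j k => Φ0 (j,k))ᴴ * (Matrix.of fun j k => Φ1 (j,k)))).trace := by
  rw [one_kron_mulVec, Matrix.trace_mul_comm]
  simp only [dotProduct, Fintype.sum_prod_type, Pi.star_apply, RCLike.star_def,
    Matrix.trace, Matrix.diag_apply, Matrix.mul_apply, Matrix.conjTranspose_apply,
    Matrix.transpose_apply, Matrix.of_apply, Finset.sum_mul, Finset.mul_sum]
  rw [Finset.sum_comm]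
  apply Finset.sum_congr rfl; intro k _
  rw [Finset.sum_comm]
  apply Finset.sum_congr rfl; intro k' _
  apply Finset.sum_congr rfl; intro j _
  ring_nf
  try ring

lemma dot_kron_left (B : Matrix m m ℂ) (Φ0 Φ1 : m × n → ℂ) :
    star Φ0 ⬝ᵥ ((B ⊗ₖ (1 : Matrix n n ℂ)) *ᵥ Φ1)
      = (Bᵀ * (((Matrix.of fun j k => Φ0 (j,k))ᵀ)ᴴ * (Matrix.of fun j k => Φ1 (j,k))ᵀ)).trace := by
  rw [kron_one_mulVec, Matrix.trace_mul_comm]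
  simp only [dotProduct, Fintype.sum_prod_type, Pi.star_apply, RCLike.star_def,
    Matrix.trace, Matrix.diag_apply, Matrix.mul_apply, Matrix.conjTranspose_apply,
    Matrix.transpose_apply, Matrix.of_apply, Finset.sum_mul, Finset.mul_sum]
  apply Finset.sum_congr rfl; intro j _
  rw [Finset.sum_comm (s := (Finset.univ : Finset n)) (t := (Finset.univ : Finset m))]
  apply Finset.sum_congr rfl; intro j' _
  apply Finset.sum_congr rfl; intro k _
  ring

lemma ptraceRight_eq (Φ : m × n → ℂ) :
    ptraceRight (vecMulVec Φ (star Φ))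
      = (Matrix.of fun j k => Φ (j,k)) * (Matrix.of fun j k => Φ (j,k))ᴴ := by
  ext i j
  simp [ptraceRight, Matrix.vecMulVec_apply, Matrix.mul_apply, Matrix.conjTranspose_apply]

lemma ptraceLeft_eq (Φ : m × n → ℂ) :
    ptraceLeft (vecMulVec Φ (star Φ))
      = (Matrix.of fun j k => Φ (j,k))ᵀ * ((Matrix.of fun j k => Φ (j,k))ᵀ)ᴴ := by
  ext k k'
  simp [ptraceLeft, Matrix.vecMulVec_apply, Matrix.mul_apply, Matrix.conjTranspose_apply]

lemma unitary_vecMulVec {l : Type*} [Fintype l] (U : Matrix l l ℂ) (v : l → ℂ) :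
    U * vecMulVec v (star v) * Uᴴ = vecMulVec (U *ᵥ v) (star (U *ᵥ v)) := by
  ext p q
  simp only [Matrix.mul_apply, Matrix.vecMulVec_apply, Matrix.conjTranspose_apply,
    Pi.star_apply, Matrix.mulVec, dotProduct, RCLike.star_def, map_sum, _root_.map_mul,
    Finset.sum_mul, Finset.mul_sum]
  apply Finset.sum_congr rfl; intro r _
  apply Finset.sum_congr rfl; intro s _
  ring

lemma dot_unitary {l : Type*} [Fintype l] (U M : Matrix l l ℂ) (v w : l → ℂ) :
    star (U *ᵥ v) ⬝ᵥ (M *ᵥ (U *ᵥ w)) = star v ⬝ᵥ ((Uᴴ * M * U) *ᵥ w) := by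
  rw [Matrix.star_mulVec, Matrix.mulVec_mulVec, ← dotProduct_mulVec,
    Matrix.mulVec_mulVec, ← Matrix.mul_assoc]

end AuxC

/-- Wigner–Araki–Yanase theorem on distinguishability (pure apparatus state). -/
theorem waY_distinguishability_pure
    {m n : Type*} [Fintype m] [Fintype n] [DecidableEq m] [DecidableEq n]
    (LS : Matrix m m ℂ) (hLS : LS.IsHermitian)
    (LA : Matrix n n ℂ) (hLA : LA.IsHermitian)
    (U : Matrix (m × n) (m × n) ℂ) (hU : Uᴴ * U = 1) (hU' : U * Uᴴ = 1)
    (hcomm : U * (LS ⊗ₖ (1 : Matrix n n ℂ) + (1 : Matrix m m ℂ) ⊗ₖ LA)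
           = (LS ⊗ₖ (1 : Matrix n n ℂ) + (1 : Matrix m m ℂ) ⊗ₖ LA) * U)
    (ψ0 ψ1 : m → ℂ) (hψ0 : star ψ0 ⬝ᵥ ψ0 = 1) (hψ1 : star ψ1 ⬝ᵥ ψ1 = 1)
    (horth : star ψ0 ⬝ᵥ ψ1 = 0)
    (Ω : n → ℂ) (hΩ : star Ω ⬝ᵥ Ω = 1)
    (ρ0 ρ1 : Matrix (m × n) (m × n) ℂ)
    (hρ0 : ρ0 = U * vecMulVec (fun p : m × n => ψ0 p.1 * Ω p.2)
                    (star fun p : m × n => ψ0 p.1 * Ω p.2) * Uᴴ)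
    (hρ1 : ρ1 = U * vecMulVec (fun p : m × n => ψ1 p.1 * Ω p.2)
                    (star fun p : m × n => ψ1 p.1 * Ω p.2) * Uᴴ) :
    ‖star ψ0 ⬝ᵥ (LS *ᵥ ψ1)‖
      ≤ opNorm LA * fidelity (ptraceRight ρ0) (ptraceRight ρ1)
        + opNorm LS * fidelity (ptraceLeft ρ0) (ptraceLeft ρ1) := by
  set v0 : m × n → ℂ := fun p => ψ0 p.1 * Ω p.2 with hv0
  set v1 : m × n → ℂ := fun p => ψ1 p.1 * Ω p.2 with hv1
  set L := LS ⊗ₖ (1 : Matrix n n ℂ) + (1 : Matrix m m ℂ) ⊗ₖ LA with hLdef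
  set Φ0 : m × n → ℂ := U *ᵥ v0 with hΦ0
  set Φ1 : m × n → ℂ := U *ᵥ v1 with hΦ1
  set A0 : Matrix m n ℂ := Matrix.of fun j k => Φ0 (j,k) with hA0
  set A1 : Matrix m n ℂ := Matrix.of fun j k => Φ1 (j,k) with hA1
  have hULU : Uᴴ * L * U = L := by
    rw [Matrix.mul_assoc, ← hcomm, ← Matrix.mul_assoc, hU, Matrix.one_mul]
  have step1 : star ψ0 ⬝ᵥ (LS *ᵥ ψ1) = star v0 ⬝ᵥ (L *ᵥ v1) := by
    rw [hv0, hv1, hLdef, Matrix.add_mulVec, dotProduct_add,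
      kron_dot LS 1 ψ0 ψ1 Ω Ω, kron_dot 1 LA ψ0 ψ1 Ω Ω,
      Matrix.one_mulVec, Matrix.one_mulVec, hΩ, horth]
    ring
  have step2 : star v0 ⬝ᵥ (L *ᵥ v1) = star Φ0 ⬝ᵥ (L *ᵥ Φ1) := by
    rw [hΦ0, hΦ1, dot_unitary, hULU]
  have step3 : star Φ0 ⬝ᵥ (L *ᵥ Φ1)
      = (LSᵀ * ((A0ᵀ)ᴴ * A1ᵀ)).trace + (LAᵀ * (A0ᴴ * A1)).trace := by
    rw [hLdef, Matrix.add_mulVec, dotProduct_add,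
      dot_kron_left LS Φ0 Φ1, dot_kron_right LA Φ0 Φ1, ← hA0, ← hA1]
  have hρ0' : ρ0 = vecMulVec Φ0 (star Φ0) := by
    rw [hρ0, unitary_vecMulVec U v0, ← hΦ0]
  have hρ1' : ρ1 = vecMulVec Φ1 (star Φ1) := by
    rw [hρ1, unitary_vecMulVec U v1, ← hΦ1]
  have hR0 : ptraceRight ρ0 = A0 * A0ᴴ := by rw [hρ0', ptraceRight_eq, ← hA0]
  have hR1 : ptraceRight ρ1 = A1 * A1ᴴ := by rw [hρ1', ptraceRight_eq, ← hA1]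
  have hL0 : ptraceLeft ρ0 = A0ᵀ * (A0ᵀ)ᴴ := by rw [hρ0', ptraceLeft_eq, ← hA0]
  have hL1 : ptraceLeft ρ1 = A1ᵀ * (A1ᵀ)ᴴ := by rw [hρ1', ptraceLeft_eq, ← hA1]
  have hb2 : ‖(LAᵀ * (A0ᴴ * A1)).trace‖
      ≤ opNorm LA * fidelity (ptraceRight ρ0) (ptraceRight ρ1) := by
    have h := overlap_bound A0 A1 LAᵀ
    rw [l2_opNorm_transpose] at h
    rw [hR0, hR1, opNorm_eq_l2]
    exact h
  have hb1 : ‖(LSᵀ * ((A0ᵀ)ᴴ * A1ᵀ)).trace‖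
      ≤ opNorm LS * fidelity (ptraceLeft ρ0) (ptraceLeft ρ1) := by
    have h := overlap_bound A0ᵀ A1ᵀ LSᵀ
    rw [l2_opNorm_transpose] at h
    rw [hL0, hL1, opNorm_eq_l2]
    exact h
  calc ‖star ψ0 ⬝ᵥ (LS *ᵥ ψ1)‖
      = ‖(LSᵀ * ((A0ᵀ)ᴴ * A1ᵀ)).trace + (LAᵀ * (A0ᴴ * A1)).trace‖ := by
        rw [step1, step2, step3]
    _ ≤ ‖(LSᵀ * ((A0ᵀ)ᴴ * A1ᵀ)).trace‖ + ‖(LAᵀ * (A0ᴴ * A1)).trace‖ :=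
        norm_add_le _ _
    _ ≤ opNorm LS * fidelity (ptraceLeft ρ0) (ptraceLeft ρ1)
        + opNorm LA * fidelity (ptraceRight ρ0) (ptraceRight ρ1) := add_le_add hb1 hb2
    _ = opNorm LA * fidelity (ptraceRight ρ0) (ptraceRight ρ1)
        + opNorm LS * fidelity (ptraceLeft ρ0) (ptraceLeft ρ1) := add_comm _ _
end
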